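/- For Pareto inter-request times, the ratio of the static baseline cost min(((\alpha-1)/\alpha)(R/t_m), 1) to the optimal offline cost is unbounded: setting \alpha = 1/(1 - t_m/R) and letting t_m/R \to 0+, the ratio 1/(1 - (1-x) x^{x/(1-x)}) (with x = t_m/R) tends to infinity. -/

import Mathlib

open Filter Real Set Topology

lemma aux_tendsto :
    Filter.Tendsto (fun x : ℝ => 1 - (1 - x) * x ^ (x / (1 - x)))
      (nhdsWithin 0 (Set.Ioi 0)) (nhdsWithin 0 (Set.Ioi 0)) := by
  rw [tendsto_nhdsWithin_iff]
  constructor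
  · -- tendsto to 𝓝 0
    have h1 : Tendsto (fun x : ℝ => Real.log x * x) (𝓝[>] 0) (𝓝 0) := by
      simpa only [Real.rpow_one] using tendsto_log_mul_rpow_nhdsGT_zero zero_lt_one
    have h2 : Tendsto (fun x : ℝ => 1 / (1 - x)) (𝓝[>] (0:ℝ)) (𝓝 1) := by
      have : Tendsto (fun x : ℝ => 1 / (1 - x)) (𝓝 (0:ℝ)) (𝓝 1) := by
        have : ContinuousAt (fun x : ℝ => 1 / (1 - x)) 0 := by
          apply ContinuousAt.div continuousAt_const (by fun_prop)
          norm_num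
        simpa using this.tendsto
      exact this.mono_left nhdsWithin_le_nhds
    have h3 : Tendsto (fun x : ℝ => Real.log x * (x / (1 - x))) (𝓝[>] (0:ℝ)) (𝓝 0) := by
      have := h1.mul h2
      simp only [zero_mul] at this
      refine this.congr (fun x => by ring)
    have h4 : Tendsto (fun x : ℝ => x ^ (x / (1 - x))) (𝓝[>] (0:ℝ)) (𝓝 1) := by
      have he : Tendsto (fun x : ℝ => Real.exp (Real.log x * (x / (1 - x))))
          (𝓝[>] (0:ℝ)) (𝓝 1) := by
        simpa [Function.comp_def] using (Real.continuous_exp.tendsto 0).comp h3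
      refine he.congr' ?_
      filter_upwards [self_mem_nhdsWithin] with x hx
      rw [Real.rpow_def_of_pos hx]
    have h5 : Tendsto (fun x : ℝ => (1 - x)) (𝓝[>] (0:ℝ)) (𝓝 1) := by
      have : Tendsto (fun x : ℝ => (1 - x)) (𝓝 (0:ℝ)) (𝓝 1) := by
        simpa [Pi.sub_def] using (continuous_const.sub continuous_id).tendsto (0:ℝ)
      exact this.mono_left nhdsWithin_le_nhds
    have := (tendsto_const_nhds (x := (1:ℝ)) (f := 𝓝[>] (0:ℝ))).sub (h5.mul h4)
    simpa using this
  · -- eventually positive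
    filter_upwards [Ioo_mem_nhdsGT_of_mem (by norm_num : (0:ℝ) ∈ Ico 0 1)] with x hx
    obtain ⟨hx0, hx1⟩ := hx
    have hexp : 0 < x / (1 - x) := div_pos hx0 (by linarith)
    have hlt : x ^ (x / (1 - x)) < 1 := Real.rpow_lt_one (le_of_lt hx0) hx1 hexp
    have hge : 0 ≤ x ^ (x / (1 - x)) := Real.rpow_nonneg (le_of_lt hx0) _
    have : (1 - x) * x ^ (x / (1 - x)) < 1 := by nlinarith
    simpa using this

/-- For Pareto inter-request times the ratio of the static
baseline cost `min (((α-1)/α)(R/t_m)) 1` to the optimal offline cost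
`1 - (1/α)(t_m/R)^(α-1)` is unbounded: setting `α = 1/(1 - t_m/R)` and letting
`x = t_m/R → 0+`, the ratio `1/(1 - (1-x) x^(x/(1-x)))` tends to infinity;
consequently the static-to-offline ratio exceeds any bound `B`. -/
theorem static_baseline_pareto_unbounded :
    Filter.Tendsto (fun x : ℝ => 1 / (1 - (1 - x) * x ^ (x / (1 - x))))
      (nhdsWithin 0 (Set.Ioi 0)) Filter.atTop ∧
    ∀ B : ℝ, ∃ R tm α : ℝ, 0 < tm ∧ tm ≤ R ∧ 1 < α ∧ α = 1 / (1 - tm / R) ∧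
      B < min ((α - 1) / α * (R / tm)) 1 / (1 - (1 / α) * (tm / R) ^ (α - 1)) := by
  have hmain : Filter.Tendsto (fun x : ℝ => 1 / (1 - (1 - x) * x ^ (x / (1 - x))))
      (nhdsWithin 0 (Set.Ioi 0)) Filter.atTop := by
    simpa [one_div, Pi.inv_def] using aux_tendsto.inv_tendsto_nhdsGT_zero
  refine ⟨hmain, fun B => ?_⟩
  have hev : ∀ᶠ x in 𝓝[>] (0:ℝ), B < 1 / (1 - (1 - x) * x ^ (x / (1 - x))) :=
    hmain.eventually_gt_atTop B
  have hmem : ∀ᶠ x in 𝓝[>] (0:ℝ), x ∈ Set.Ioo (0:ℝ) 1 :=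
    Ioo_mem_nhdsGT_of_mem (by norm_num : (0:ℝ) ∈ Ico 0 1)
  obtain ⟨x, hBx, hx0, hx1⟩ := (hev.and hmem).exists
  refine ⟨1, x, 1 / (1 - x), hx0, le_of_lt hx1, ?_, by rw [div_one], ?_⟩
  · exact one_lt_one_div (by linarith) (by linarith)
  · have h1x : (1:ℝ) - x ≠ 0 := by linarith
    have hxne : x ≠ 0 := ne_of_gt hx0
    have hα1 : (1 / (1 - x)) - 1 = x / (1 - x) := by field_simp; ring
    have hmin : min ((1 / (1 - x) - 1) / (1 / (1 - x)) * (1 / x)) 1 = 1 := by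
      have : (1 / (1 - x) - 1) / (1 / (1 - x)) * (1 / x) = 1 := by
        rw [hα1]; field_simp
      rw [this, min_self]
    have hinv : 1 / (1 / (1 - x)) = 1 - x := by field_simp
    rw [hmin, hα1, hinv, div_one]
    exact hBx
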